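/- Let x ∈ Y with x_i finite for 1 ≤ i < M and x_i = ∞ for i ≥ M, let K ∈ ℕ with K ≥ x_{M−1}, and define y ∈ Y by y_i = x_i for 0 ≤ i < M and y_i = K for i ≥ M. Then for every n ≥ 1, the zeroth coordinates x₀ⁿ of Fⁿ(x) and y₀ⁿ of Fⁿ(y) differ by (2^{−M+1}·Σ_{j=0}^{n−1} 1/(K+j)) mod 1, and moreover d_i(x_iⁿ, y_iⁿ) = 0 for 0 < i < M and d_i(x_iⁿ, y_iⁿ) = 1/(K+n) for i ≥ M. -/

import Mathlib

open Filter

noncomputable section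

instance : Fact ((0:ℝ) < 1) := ⟨one_pos⟩

/-- The unit circle `𝕊 = ℝ/ℤ` (with the metric `d₀(x,y) = min{|x−y|, 1−|x−y|}`). -/
abbrev Circle1 := AddCircle (1 : ℝ)

/-- Points of the product space `Π_{i=0}^∞ X_i = 𝕊 × Π_{i≥1} (ℕ ∪ {∞})`:
the first component is the circle coordinate `x₀`, and the second component gives
the coordinates `x_i ∈ ℕ ∪ {∞}` for `i ≥ 1`. -/
abbrev Pt := Circle1 × (ℕ+ → ℕ∞)

/-- `1/x` for `x ∈ ℕ ∪ {∞}`, with the convention `1/∞ = 0`. -/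
noncomputable def einv (x : ℕ∞) : ℝ := ((x.toNat : ℕ) : ℝ)⁻¹

/-- The metric `d_i(x,y) = |1/x − 1/y|` on `ℕ ∪ {∞}` (for `i ≥ 1`). -/
noncomputable def dE (x y : ℕ∞) : ℝ := |einv x - einv y|

/-- The metric `D(x,y) = Σ_{i=0}^∞ d_i(x_i,y_i)/2^i` on the product space. -/
noncomputable def D (x y : Pt) : ℝ :=
  dist x.1 y.1 + ∑' i : ℕ+, dE (x.2 i) (y.2 i) / 2 ^ (i : ℕ)

/-- `Y`: the set of points whose sequence of coordinates `(x_i)_{i≥1}` is a nondecreasing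
sequence in `ℕ ∪ {∞}` (with `ℕ = {1,2,…}`). -/
def Y : Set Pt := {x | (∀ i, 1 ≤ x.2 i) ∧ Monotone x.2}

/-- The skew-product map `F`: `f₀(x) = (x₀ + Σ_{i≥1} 2^{−i}·(1/x_i)) mod 1` and
`f_i(x) = x_i + 1` for `i ≥ 1`, with `∞ + 1 = ∞`. -/
noncomputable def F (x : Pt) : Pt :=
  (x.1 + (((∑' i : ℕ+, (1 / 2 ^ (i : ℕ)) * einv (x.2 i)) : ℝ) : Circle1),
   fun i => x.2 i + 1)

/-- `(x, y)` is a scrambled pair of `F`: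
`liminf_{n→∞} D(Fⁿ(x), Fⁿ(y)) = 0` and `limsup_{n→∞} D(Fⁿ(x), Fⁿ(y)) > 0`. -/
def ScrambledPair (x y : Pt) : Prop :=
  liminf (fun n : ℕ => D (F^[n] x) (F^[n] y)) atTop = 0 ∧
  0 < limsup (fun n : ℕ => D (F^[n] x) (F^[n] y)) atTop

lemma F_iter_snd (z : Pt) (n : ℕ) (i : ℕ+) : (F^[n] z).2 i = z.2 i + n := by
  induction n with
  | zero => simp
  | succ n ih =>
    rw [Function.iterate_succ_apply']
    show (F^[n] z).2 i + 1 = _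
    rw [ih]
    push_cast
    ring

lemma einv_nonneg (z : ℕ∞) : 0 ≤ einv z := by
  unfold einv; positivity

lemma einv_le_one (z : ℕ∞) : einv z ≤ 1 := by
  unfold einv
  rcases Nat.eq_zero_or_pos z.toNat with h | h
  · simp [h]
  · rw [inv_le_one_iff₀]; right; exact_mod_cast h

lemma summable_term (w : ℕ+ → ℕ∞) :
    Summable (fun i : ℕ+ => (1 / 2 ^ (i : ℕ) : ℝ) * einv (w i)) := by
  have hs : Summable (fun i : ℕ+ => ((1:ℝ)/2) ^ (i : ℕ)) :=
    summable_geometric_two.comp_injective (fun a b h => PNat.coe_injective h)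
  refine hs.of_nonneg_of_le (fun i => ?_) (fun i => ?_)
  · exact mul_nonneg (by positivity) (einv_nonneg _)
  · rw [div_pow, one_pow]
    calc (1 / 2 ^ (i : ℕ) : ℝ) * einv (w i) ≤ 1 / 2 ^ (i : ℕ) * 1 :=
        mul_le_mul_of_nonneg_left (einv_le_one _) (by positivity)
      _ = 1 / 2 ^ (i : ℕ) := mul_one _

lemma tsum_geom_shift (M : ℕ+) :
    ∑' k : ℕ, ((1:ℝ)/2) ^ ((M:ℕ) + k) = 2 ^ (1 - (M:ℤ)) := by
  have : ∀ k : ℕ, ((1:ℝ)/2) ^ ((M:ℕ) + k) = ((1:ℝ)/2) ^ (M:ℕ) * ((1:ℝ)/2) ^ k :=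
    fun k => pow_add _ _ _
  rw [tsum_congr this, tsum_mul_left, tsum_geometric_two,
    zpow_sub₀ (two_ne_zero), zpow_one, zpow_natCast, one_div, inv_pow]
  ring

lemma tsum_diff (x y : Pt) (M : ℕ+)
    (hinf : ∀ i : ℕ+, M ≤ i → x.2 i = ⊤)
    (hyi : ∀ i : ℕ+, i < M → y.2 i = x.2 i)
    (K : ℕ) (hyK : ∀ i : ℕ+, M ≤ i → y.2 i = (K : ℕ∞)) (n : ℕ) :
    (∑' i : ℕ+, (1 / 2 ^ (i : ℕ) : ℝ) * einv (y.2 i + n)) =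
    (∑' i : ℕ+, (1 / 2 ^ (i : ℕ) : ℝ) * einv (x.2 i + n)) +
      2 ^ (1 - (M:ℤ)) * (1 / (K + n)) := by
  set g : ℕ+ → ℝ := fun i => if M ≤ i then (1 / 2 ^ (i : ℕ) : ℝ) * (1 / (K + n)) else 0
    with hg
  have hpoint : ∀ i : ℕ+,
      (1 / 2 ^ (i : ℕ) : ℝ) * einv (y.2 i + n) =
      (1 / 2 ^ (i : ℕ) : ℝ) * einv (x.2 i + n) + g i := by
    intro i
    rcases le_or_gt M i with h | h
    · have hx' : x.2 i + n = ⊤ := by rw [hinf i h]; exact top_add _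
      have hy' : y.2 i + (n : ℕ∞) = ((K + n : ℕ) : ℕ∞) := by
        rw [hyK i h]; push_cast; ring
      rw [hx', hy', hg]
      simp only [h, if_true]
      have : einv ((K + n : ℕ) : ℕ∞) = 1 / (K + n : ℝ) := by
        unfold einv; rw [ENat.toNat_coe]; push_cast; rw [one_div]
      rw [this]
      unfold einv
      simp
    · rw [hyi i h, hg]
      simp [not_le.mpr h]
  have hs : Summable (fun i : ℕ+ => (1 / 2 ^ (i : ℕ) : ℝ)) := by
    have := summable_geometric_two.comp_injective
      (fun (a b : ℕ+) (h : (a:ℕ) = (b:ℕ)) => PNat.coe_injective h)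
    simpa [div_pow, Function.comp_def] using this
  have hgs : Summable g := by
    refine (hs.mul_right (1 / (K + n : ℝ))).of_nonneg_of_le (fun i => ?_) (fun i => ?_)
    · rw [hg]; dsimp only; split <;> positivity
    · rw [hg]; dsimp only; split
      · exact le_rfl
      · positivity
  rw [tsum_congr hpoint, Summable.tsum_add (summable_term _) hgs]
  congr 1
  -- compute ∑' g
  set e : ℕ → ℕ+ := fun k => ⟨(M:ℕ) + k, by positivity⟩ with he
  have hei : Function.Injective e := by
    intro a b h
    have := congrArg (fun z : ℕ+ => (z : ℕ)) h
    simpa [he] using this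
  have hsupp : Function.support g ⊆ Set.range e := by
    intro i hi
    have hMi : M ≤ i := by
      by_contra hc
      apply hi; rw [hg]; simp [hc]
    refine ⟨(i : ℕ) - (M : ℕ), ?_⟩
    apply PNat.coe_injective
    have h2 : (M:ℕ) ≤ (i:ℕ) := (PNat.coe_le_coe _ _).mpr hMi
    simp [he]
    omega
  rw [← hei.tsum_eq hsupp]
  have : ∀ k : ℕ, g (e k) = ((1:ℝ)/2) ^ ((M:ℕ) + k) * (1 / (K + n)) := by
    intro k
    have hMe : M ≤ e k := by
      rw [← PNat.coe_le_coe _ _]; simp [he]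
    rw [hg]
    simp only [hMe, if_true, he]
    rw [div_pow, one_pow]
    exact if_pos hMe
  rw [tsum_congr this, tsum_mul_right, tsum_geom_shift]

lemma F_iter_fst (z : Pt) (n : ℕ) :
    (F^[n+1] z).1 = (F^[n] z).1 +
      (((∑' i : ℕ+, (1 / 2 ^ (i : ℕ)) * einv ((F^[n] z).2 i)) : ℝ) : Circle1) := by
  rw [Function.iterate_succ_apply']; rfl

/-- In the setting of Claim 1 (`x ∈ Y` with `x_i` finite for `1 ≤ i < M` and `x_i = ∞` for
`i ≥ M`; `K ∈ ℕ` with `K ≥ x_{M−1}`; `y ∈ Y` with `y_i = x_i` for `0 ≤ i < M` and `y_i = K`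
for `i ≥ M`), for every `n ≥ 1` the zeroth coordinates of `Fⁿ(x)` and `Fⁿ(y)` differ by
`(2^{−M+1} · Σ_{j=0}^{n−1} 1/(K+j)) mod 1`, and moreover `d_i(x_iⁿ, y_iⁿ) = 0` for
`0 < i < M` and `d_i(x_iⁿ, y_iⁿ) = 1/(K+n)` for `i ≥ M`. -/
theorem claim1_coordinates
    (x : Pt) (hx : x ∈ Y) (M : ℕ+)
    (hfin : ∀ i : ℕ+, i < M → x.2 i ≠ ⊤) (hinf : ∀ i : ℕ+, M ≤ i → x.2 i = ⊤)
    (K : ℕ) (hK1 : 1 ≤ K) (hK : ∀ i : ℕ+, i < M → x.2 i ≤ (K : ℕ∞))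
    (y : Pt) (hy : y ∈ Y) (hy0 : y.1 = x.1)
    (hyi : ∀ i : ℕ+, i < M → y.2 i = x.2 i)
    (hyK : ∀ i : ℕ+, M ≤ i → y.2 i = (K : ℕ∞))
    (n : ℕ) (hn : 1 ≤ n) :
    (F^[n] y).1 = (F^[n] x).1 +
        ((((2 : ℝ) ^ (1 - (M : ℤ)) * ∑ j ∈ Finset.range n, (1 : ℝ) / (K + j)) : ℝ) : Circle1) ∧
    (∀ i : ℕ+, i < M → dE ((F^[n] x).2 i) ((F^[n] y).2 i) = 0) ∧
    (∀ i : ℕ+, M ≤ i → dE ((F^[n] x).2 i) ((F^[n] y).2 i) = 1 / (K + n)) := by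
  refine ⟨?_, ?_, ?_⟩
  · clear hn
    induction n with
    | zero => simp [hy0]
    | succ n ih =>
      have hsy : (F^[n] y).2 = fun i => y.2 i + n := funext fun i => F_iter_snd y n i
      have hsx : (F^[n] x).2 = fun i => x.2 i + n := funext fun i => F_iter_snd x n i
      rw [F_iter_fst, F_iter_fst, hsy, hsx, ih, Finset.sum_range_succ, mul_add]
      dsimp only
      rw [tsum_diff x y M hinf hyi K hyK n, AddCircle.coe_add, AddCircle.coe_add]
      abel
  · intro i hiM
    rw [F_iter_snd, F_iter_snd, hyi i hiM]
    simp [dE]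
  · intro i hiM
    rw [F_iter_snd, F_iter_snd, hinf i hiM, hyK i hiM]
    have h1 : (⊤ : ℕ∞) + (n : ℕ∞) = ⊤ := top_add _
    have h2 : (K : ℕ∞) + (n : ℕ∞) = ((K + n : ℕ) : ℕ∞) := by push_cast; ring
    unfold dE einv
    rw [h1, h2, ENat.toNat_coe]
    simp only [ENat.toNat_top, Nat.cast_zero, inv_zero, zero_sub, abs_neg]
    rw [abs_of_nonneg (by positivity), one_div]
    push_cast
    ring
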